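/- arXiv:0906.0240 — 4 statements merged into one kernel-verified Lean document; each statement's English description precedes it below -/
import Mathlib

section
/- Define a(n) = Σ_{k=1}^{n-1} C(n,k) · Σ_{m=1}^{n-k} C(n-k,m) · (1/2)^(k·m). Then for all n ≥ 0, a(n) ≤ 5.6 · (7/4)^n. -/
/-- The double sum `a(n) = Σ_{k=1}^{n-1} C(n,k) Σ_{m=1}^{n-k} C(n-k,m) (1/2)^{km}`. -/
noncomputable def a (n : ℕ) : ℝ :=
  ∑ k ∈ Finset.Icc 1 (n - 1), (n.choose k : ℝ) *
    ∑ m ∈ Finset.Icc 1 (n - k), ((n - k).choose m : ℝ) * (1 / 2) ^ (k * m)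

lemma sum_choose_le (x : ℝ) (hx : 0 ≤ x) (N : ℕ) :
    ∑ m ∈ Finset.Icc 1 N, (N.choose m : ℝ) * x ^ m ≤ (1 + x) ^ N := by
  have h : (x + 1 : ℝ) ^ N = ∑ m ∈ Finset.range (N + 1), x ^ m * (N.choose m : ℝ) := by
    simpa using add_pow x 1 N
  have h2 : ∑ m ∈ Finset.Icc 1 N, (N.choose m : ℝ) * x ^ m
      = ∑ m ∈ Finset.Icc 1 N, x ^ m * (N.choose m : ℝ) := by
    exact Finset.sum_congr rfl fun m _ => mul_comm _ _
  rw [h2, add_comm, h]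
  apply Finset.sum_le_sum_of_subset_of_nonneg
  · intro m hm
    simp only [Finset.mem_Icc, Finset.mem_range] at hm ⊢
    omega
  · intro i _ _
    positivity

lemma inner_le (n k : ℕ) (hk : 2 ≤ k) :
    ∑ m ∈ Finset.Icc 1 (n - k), ((n - k).choose m : ℝ) * (1 / 2) ^ (k * m)
      ≤ 4 * (1 / 2) ^ k * (5 / 4) ^ (n - k) := by
  obtain ⟨k', rfl⟩ := Nat.exists_eq_add_of_le hk
  calc ∑ m ∈ Finset.Icc 1 (n - (2 + k')), ((n - (2 + k')).choose m : ℝ) * (1 / 2) ^ ((2 + k') * m)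
      ≤ ∑ m ∈ Finset.Icc 1 (n - (2 + k')),
        (1 / 2 : ℝ) ^ k' * (((n - (2 + k')).choose m : ℝ) * (1 / 4) ^ m) := by
        apply Finset.sum_le_sum
        intro m hm
        simp only [Finset.mem_Icc] at hm
        have hexp : k' + 2 * m ≤ (2 + k') * m := by nlinarith [hm.1]
        have hle : (1 / 2 : ℝ) ^ ((2 + k') * m) ≤ (1 / 2) ^ (k' + 2 * m) := by
          apply pow_le_pow_of_le_one (by norm_num) (by norm_num) hexp
        have heq : (1 / 2 : ℝ) ^ (k' + 2 * m) = (1 / 2) ^ k' * (1 / 4) ^ m := by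
          rw [pow_add, pow_mul]; norm_num
        calc ((n - (2 + k')).choose m : ℝ) * (1 / 2) ^ ((2 + k') * m)
            ≤ ((n - (2 + k')).choose m : ℝ) * (1 / 2) ^ (k' + 2 * m) := by
              apply mul_le_mul_of_nonneg_left hle (by positivity)
          _ = (1 / 2 : ℝ) ^ k' * (((n - (2 + k')).choose m : ℝ) * (1 / 4) ^ m) := by
              rw [heq]; ring
    _ = (1 / 2 : ℝ) ^ k' * ∑ m ∈ Finset.Icc 1 (n - (2 + k')),
          ((n - (2 + k')).choose m : ℝ) * (1 / 4) ^ m := by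
        rw [Finset.mul_sum]
    _ ≤ (1 / 2 : ℝ) ^ k' * (5 / 4) ^ (n - (2 + k')) := by
        apply mul_le_mul_of_nonneg_left _ (by positivity)
        have := sum_choose_le (1 / 4 : ℝ) (by norm_num) (n - (2 + k'))
        norm_num at this ⊢
        convert this using 2
    _ = 4 * (1 / 2) ^ (2 + k') * (5 / 4) ^ (n - (2 + k')) := by
        rw [pow_add]; ring

lemma a_le (n : ℕ) (hn : 2 ≤ n) : a n ≤ (n : ℝ) * (3 / 2) ^ (n - 1) + 4 * (7 / 4) ^ n := by
  have step1 : a n ≤ ∑ k ∈ Finset.Icc 1 (n - 1),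
      ((n.choose k : ℝ) * (4 * (1 / 2) ^ k * (5 / 4) ^ (n - k)) +
        if k = 1 then (n : ℝ) * (3 / 2) ^ (n - 1) else 0) := by
    unfold a
    apply Finset.sum_le_sum
    intro k hk
    simp only [Finset.mem_Icc] at hk
    rcases eq_or_lt_of_le hk.1 with h1 | h2
    · -- k = 1
      subst h1
      rw [if_pos rfl]
      have hchoose : (n.choose 1 : ℝ) = n := by rw [Nat.choose_one_right]
      have hin : ∑ m ∈ Finset.Icc 1 (n - 1), ((n - 1).choose m : ℝ) * (1 / 2) ^ (1 * m)
          ≤ (3 / 2) ^ (n - 1) := by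
        have := sum_choose_le (1 / 2 : ℝ) (by norm_num) (n - 1)
        norm_num at this ⊢
        exact this
      have h1 : (n.choose 1 : ℝ) * ∑ m ∈ Finset.Icc 1 (n - 1), ((n - 1).choose m : ℝ) * (1 / 2) ^ (1 * m)
          ≤ (n : ℝ) * (3 / 2) ^ (n - 1) := by
        rw [hchoose]
        apply mul_le_mul_of_nonneg_left hin (by positivity)
      have h0 : (0 : ℝ) ≤ (n.choose 1 : ℝ) * (4 * (1 / 2) ^ 1 * (5 / 4) ^ (n - 1)) := by positivity
      linarith
    · -- 2 ≤ k
      have hk2 : 2 ≤ k := h2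
      rw [if_neg (by omega)]
      rw [add_zero]
      exact mul_le_mul_of_nonneg_left (inner_le n k hk2) (by positivity)
  have step2 : ∑ k ∈ Finset.Icc 1 (n - 1),
      ((n.choose k : ℝ) * (4 * (1 / 2) ^ k * (5 / 4) ^ (n - k)) +
        if k = 1 then (n : ℝ) * (3 / 2) ^ (n - 1) else 0)
      = (∑ k ∈ Finset.Icc 1 (n - 1), (n.choose k : ℝ) * (4 * (1 / 2) ^ k * (5 / 4) ^ (n - k)))
        + (n : ℝ) * (3 / 2) ^ (n - 1) := by
    rw [Finset.sum_add_distrib]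
    congr 1
    rw [Finset.sum_ite_eq' (Finset.Icc 1 (n - 1)) 1 (fun _ => (n : ℝ) * (3 / 2) ^ (n - 1))]
    rw [if_pos]
    simp only [Finset.mem_Icc]
    omega
  have step3 : ∑ k ∈ Finset.Icc 1 (n - 1), (n.choose k : ℝ) * (4 * (1 / 2) ^ k * (5 / 4) ^ (n - k))
      ≤ 4 * (7 / 4) ^ n := by
    have hpow : ((7 : ℝ) / 4) ^ n
        = ∑ k ∈ Finset.range (n + 1), (1 / 2 : ℝ) ^ k * (5 / 4) ^ (n - k) * (n.choose k : ℝ) := by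
      have := add_pow (1 / 2 : ℝ) (5 / 4) n
      norm_num at this
      convert this using 2
    have hsub : ∑ k ∈ Finset.Icc 1 (n - 1), (1 / 2 : ℝ) ^ k * (5 / 4) ^ (n - k) * (n.choose k : ℝ)
        ≤ ∑ k ∈ Finset.range (n + 1), (1 / 2 : ℝ) ^ k * (5 / 4) ^ (n - k) * (n.choose k : ℝ) := by
      apply Finset.sum_le_sum_of_subset_of_nonneg
      · intro k hk
        simp only [Finset.mem_Icc, Finset.mem_range] at hk ⊢
        omega
      · intro i _ _
        positivity
    calc ∑ k ∈ Finset.Icc 1 (n - 1), (n.choose k : ℝ) * (4 * (1 / 2) ^ k * (5 / 4) ^ (n - k))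
        = 4 * ∑ k ∈ Finset.Icc 1 (n - 1), (1 / 2 : ℝ) ^ k * (5 / 4) ^ (n - k) * (n.choose k : ℝ) := by
          rw [Finset.mul_sum]
          exact Finset.sum_congr rfl fun k _ => by ring
      _ ≤ 4 * ∑ k ∈ Finset.range (n + 1), (1 / 2 : ℝ) ^ k * (5 / 4) ^ (n - k) * (n.choose k : ℝ) := by
          linarith
      _ = 4 * (7 / 4) ^ n := by rw [← hpow]
  calc a n ≤ _ := step1
    _ = _ := step2
    _ ≤ (n : ℝ) * (3 / 2) ^ (n - 1) + 4 * (7 / 4) ^ n := by linarith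

lemma aux_bound : ∀ n : ℕ, (n : ℝ) * (3 / 2) ^ (n - 1) ≤ 1.6 * (7 / 4) ^ n := by
  intro n
  rcases lt_or_ge n 7 with h | h
  · interval_cases n <;> norm_num
  · induction n, h using Nat.le_induction with
    | base => norm_num
    | succ n hn ih =>
      have hn1 : (7 : ℝ) ≤ (n : ℝ) := by exact_mod_cast hn
      have hpos : (0 : ℝ) < (7 / 4) ^ n := by positivity
      have hpow32 : (3 / 2 : ℝ) ^ n = (3 / 2) ^ (n - 1) * (3 / 2) := by
        rw [← pow_succ]
        congr 1
        omega
      push_cast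
      rw [hpow32, pow_succ]
      have hp : (0 : ℝ) ≤ (3 / 2 : ℝ) ^ (n - 1) := by positivity
      nlinarith [ih, hp, hpos]

theorem a_upper_bound (n : ℕ) : a n ≤ 5.6 * (7 / 4) ^ n := by
  rcases lt_or_ge n 2 with hn | hn
  · interval_cases n <;> simp [a] <;> positivity
  · have h1 := a_le n hn
    have h2 := aux_bound n
    have h3 : (5.6 : ℝ) = 1.6 + 4 := by norm_num
    calc a n ≤ (n : ℝ) * (3 / 2) ^ (n - 1) + 4 * (7 / 4) ^ n := h1
      _ ≤ 1.6 * (7 / 4) ^ n + 4 * (7 / 4) ^ n := by linarith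
      _ = 5.6 * (7 / 4) ^ n := by norm_num; ring
end

section
/- Let G be a uniformly random tournament on n ≥ 2 labeled vertices and let a, s be distinct vertices. Let A be the event that there is no directed path from a to s. Then P(A) ≤ (1/2)^(n-2) · (1 + 3.2·(7/8)^(n-1)). -/
/-- A tournament on `Fin n`: an orientation of each edge `{i,j}`, `i < j`, of the complete
graph. `ω ⟨(i,j),h⟩ = true` means the edge is oriented `i → j`. Each of the `2^(n choose 2)`
orientations is equally likely under the uniform probability `Pr`. -/
abbrev Orient (n : ℕ) : Type := {p : Fin n × Fin n // p.1 < p.2} → Bool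

/-- The edge between `i` and `j` is oriented from `i` to `j`. -/
def dir {n : ℕ} (ω : Orient n) (i j : Fin n) : Prop :=
  (∃ h : i < j, ω ⟨(i, j), h⟩ = true) ∨ (∃ h : j < i, ω ⟨(j, i), h⟩ = false)

/-- There is a directed path from `a` to `s` in the tournament `ω`. -/
def reaches {n : ℕ} (ω : Orient n) (a s : Fin n) : Prop :=
  Relation.TransGen (dir ω) a s

/-- The probability of the event `E` for a uniformly random tournament on `n` vertices. -/
noncomputable def Pr (n : ℕ) (E : Orient n → Prop) : ℝ :=
  haveI := Classical.decPred E
  ((Finset.univ.filter E).card : ℝ) / (Fintype.card (Orient n) : ℝ)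

open Finset

lemma Pr_eq (n : ℕ) (E : Orient n → Prop) [DecidablePred E] :
    Pr n E = ((Finset.univ.filter E).card : ℝ) / (Fintype.card (Orient n) : ℝ) := by
  unfold Pr
  rw [Finset.filter_congr_decidable]

lemma Pr_union_le {β : Type*} (n : ℕ) (P : Finset β) (B : β → Orient n → Prop)
    (E : Orient n → Prop) (hcov : ∀ ω, E ω → ∃ S ∈ P, B S ω) :
    Pr n E ≤ ∑ S ∈ P, Pr n (B S) := by
  classical
  simp only [Pr_eq]
  rw [← Finset.sum_div]
  gcongr ?_ / _
  calc ((Finset.univ.filter E).card : ℝ)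
        ≤ ((P.biUnion (fun S => Finset.univ.filter (B S))).card : ℝ) := by
          exact_mod_cast Nat.cast_le.2 (Finset.card_le_card (by
            intro ω hω
            simp only [Finset.mem_filter, Finset.mem_univ, true_and] at hω
            obtain ⟨S, hS, hBS⟩ := hcov ω hω
            exact Finset.mem_biUnion.2 ⟨S, hS, by simp [hBS]⟩))
      _ ≤ ∑ S ∈ P, ((Finset.univ.filter (B S)).card : ℝ) := by
          exact_mod_cast Nat.cast_le.2 (Finset.card_biUnion_le)


lemma card_fixed {ι : Type*} [Fintype ι] [DecidableEq ι] (T : Finset ι) (g : ι → Bool) :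
    (Finset.univ.filter (fun ω : ι → Bool => ∀ e ∈ T, ω e = g e)).card
      = 2 ^ (Fintype.card ι - T.card) := by
  rw [← Fintype.card_subtype]
  have e : {ω : ι → Bool // ∀ e ∈ T, ω e = g e} ≃ ({e : ι // e ∉ T} → Bool) :=
    { toFun := fun ω i => ω.1 i.1
      invFun := fun f => ⟨fun i => if h : i ∈ T then g i else f ⟨i, h⟩, by
        intro e he; simp [he]⟩
      left_inv := by
        rintro ⟨ω, hω⟩
        ext i
        by_cases h : i ∈ T
        · simp only [h, dif_pos]
          exact (hω i h).symm
        · simp [h]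
      right_inv := by
        intro f; ext i; simp [i.2] }
  rw [Fintype.card_congr e, Fintype.card_fun, Fintype.card_subtype_compl,
    Fintype.card_coe, Fintype.card_bool]

section
variable {n : ℕ}

abbrev Edge (n : ℕ) := {p : Fin n × Fin n // p.1 < p.2}


/-- all edges across the cut point into S -/
def cutE (S : Finset (Fin n)) (ω : Orient n) : Prop :=
  ∀ u ∈ S, ∀ w, w ∉ S → dir ω w u

def cutT (S : Finset (Fin n)) : Finset (Edge n) :=
  univ.filter (fun e => ¬ ((e.1.1 ∈ S) ↔ (e.1.2 ∈ S)))

lemma dir_total (ω : Orient n) {i j : Fin n} (h : i ≠ j) : dir ω i j ∨ dir ω j i := by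
  rcases lt_or_gt_of_ne h with hlt | hgt
  · cases hb : ω ⟨(i, j), hlt⟩
    · exact Or.inr (Or.inr ⟨hlt, hb⟩)
    · exact Or.inl (Or.inl ⟨hlt, hb⟩)
  · cases hb : ω ⟨(j, i), hgt⟩
    · exact Or.inl (Or.inr ⟨hgt, hb⟩)
    · exact Or.inr (Or.inl ⟨hgt, hb⟩)

lemma cutE_iff (S : Finset (Fin n)) (ω : Orient n) :
    cutE S ω ↔ ∀ e ∈ cutT S, ω e = decide (e.1.1 ∉ S) := by
  constructor
  · intro hc e he
    simp only [cutT, mem_filter, mem_univ, true_and] at he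
    obtain ⟨p, hp⟩ := e
    by_cases h1 : p.1 ∈ S
    · have h2 : p.2 ∉ S := fun h2 => he ⟨fun _ => h2, fun _ => h1⟩
      have := hc p.1 h1 p.2 h2
      rcases this with ⟨h, _⟩ | ⟨h, hb⟩
      · exact absurd hp (lt_asymm h)
      · simp [h1, hb]
    · have h2 : p.2 ∈ S := by
        by_contra h2
        exact he ⟨fun h => absurd h h1, fun h => absurd h h2⟩
      have := hc p.2 h2 p.1 h1
      rcases this with ⟨h, hb⟩ | ⟨h, _⟩
      · simp [h1, hb]
      · exact absurd hp (lt_asymm h)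
  · intro hc u hu w hw
    have hne : w ≠ u := fun h => hw (h ▸ hu)
    rcases lt_or_gt_of_ne hne with hlt | hgt
    · have he : (⟨(w, u), hlt⟩ : Edge n) ∈ cutT S := by
        simp only [cutT, mem_filter, mem_univ, true_and]
        exact fun hiff => hw (hiff.2 hu)
      have := hc _ he
      simp only [hw, decide_eq_true_eq] at this
      exact Or.inl ⟨hlt, by simpa [hw] using this⟩
    · have he : (⟨(u, w), hgt⟩ : Edge n) ∈ cutT S := by
        simp only [cutT, mem_filter, mem_univ, true_and]
        exact fun hiff => hw (hiff.1 hu)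
      have := hc _ he
      exact Or.inr ⟨hgt, by simpa [hu] using this⟩

lemma cutT_card (S : Finset (Fin n)) :
    (cutT S).card = S.card * Sᶜ.card := by
  rw [← Finset.card_product]
  have hj : ∀ p ∈ S ×ˢ Sᶜ, ¬ p.1 < p.2 → p.2 < p.1 := by
    intro p hp h
    have hmem := Finset.mem_product.1 hp
    have hne : p.1 ≠ p.2 := fun hh => (Finset.mem_compl.1 hmem.2) (hh ▸ hmem.1)
    exact lt_of_le_of_ne (not_lt.1 h) hne.symm
  refine Finset.card_bij'
    (i := fun e (_ : e ∈ cutT S) =>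
      if (e : Fin n × Fin n).1 ∈ S then ((e : Fin n × Fin n).1, (e : Fin n × Fin n).2)
      else ((e : Fin n × Fin n).2, (e : Fin n × Fin n).1))
    (j := fun p hp => if h : p.1 < p.2 then ⟨(p.1, p.2), h⟩ else ⟨(p.2, p.1), hj p hp h⟩)
    ?_ ?_ ?_ ?_
  · -- hi
    intro e he
    simp only [cutT, mem_filter, mem_univ, true_and] at he
    have hlt := e.2
    by_cases h1 : (e : Fin n × Fin n).1 ∈ S
    · have h2 : (e : Fin n × Fin n).2 ∉ S := fun h2 => he ⟨fun _ => h2, fun _ => h1⟩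
      simp [h1, Finset.mem_product, Finset.mem_compl, h2]
    · have h2 : (e : Fin n × Fin n).2 ∈ S := by
        by_contra h2
        exact he ⟨fun h => absurd h h1, fun h => absurd h h2⟩
      simp [h1, Finset.mem_product, Finset.mem_compl, h2]
  · -- hj
    intro p hp
    have hmem := Finset.mem_product.1 hp
    have h1 : p.1 ∈ S := hmem.1
    have h2 : p.2 ∉ S := Finset.mem_compl.1 hmem.2
    by_cases h : p.1 < p.2
    · simp only [dif_pos h, cutT, mem_filter, mem_univ, true_and]
      exact fun hiff => h2 (hiff.1 h1)
    · simp only [dif_neg h, cutT, mem_filter, mem_univ, true_and]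
      exact fun hiff => h2 (hiff.2 h1)
  · -- left_inv
    intro e he
    simp only [cutT, mem_filter, mem_univ, true_and] at he
    have hlt := e.2
    by_cases h1 : (e : Fin n × Fin n).1 ∈ S
    · simp only [if_pos h1]
      rw [dif_pos hlt]
    · simp only [if_neg h1]
      rw [dif_neg (lt_asymm hlt)]
  · -- right_inv
    intro p hp
    have hmem := Finset.mem_product.1 hp
    have h1 : p.1 ∈ S := hmem.1
    have h2 : p.2 ∉ S := Finset.mem_compl.1 hmem.2
    by_cases h : p.1 < p.2
    · simp [dif_pos h, h1]
    · simp [dif_neg h, h2, h1]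

end

section
variable {n : ℕ}

lemma Pr_cutE (S : Finset (Fin n)) : Pr n (cutE S) = (1 / 2 : ℝ) ^ (S.card * (n - S.card)) := by
  classical
  rw [Pr_eq]
  have hfe : Finset.univ.filter (cutE S)
      = Finset.univ.filter (fun ω : Orient n => ∀ e ∈ cutT S, ω e = decide ((e : Fin n × Fin n).1 ∉ S)) := by
    apply Finset.filter_congr
    intro ω _
    exact cutE_iff S ω
  rw [show (Fintype.card (Orient n) : ℝ) = (Fintype.card (Orient n) : ℝ) from rfl]
  rw [hfe, card_fixed]
  have hcard : (cutT S).card = S.card * (n - S.card) := by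
    rw [cutT_card, Finset.card_compl, Fintype.card_fin]
  have hle : (cutT S).card ≤ Fintype.card (Edge n) := by
    simpa using Finset.card_le_univ (cutT S)
  rw [Fintype.card_fun, Fintype.card_bool, hcard]
  rw [← hcard]
  have h2 : (2 : ℝ) ^ Fintype.card (Edge n)
      = 2 ^ (Fintype.card (Edge n) - (cutT S).card) * 2 ^ (cutT S).card := by
    rw [← pow_add]
    congr 1
    omega
  push_cast
  rw [h2]
  rw [div_eq_iff (by positivity)]
  rw [one_div, inv_pow]
  field_simp
end

lemma choose_le_two_pow' (m j : ℕ) : (m.choose j) ≤ 2 ^ m := by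
  rcases le_or_gt j m with h | h
  · calc m.choose j ≤ ∑ i ∈ range (m+1), m.choose i :=
        Finset.single_le_sum (fun i _ => Nat.zero_le _) (mem_range.2 (Nat.lt_succ_of_le h))
    _ = 2 ^ m := Nat.sum_range_choose m
  · simp [Nat.choose_eq_zero_of_lt h, Nat.zero_le]

lemma decay (m : ℕ) (hm : 6 ≤ m) :
    ((m - 1 : ℕ) : ℝ) * (2 * m + 16) * (4 / 7) ^ m ≤ 5.6 := by
  induction m, hm using Nat.le_induction with
  | base => norm_num
  | succ m hm ih =>
    have hm1 : (1:ℝ) ≤ (m : ℝ) := by exact_mod_cast Nat.one_le_iff_ne_zero.2 (by omega)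
    have hc1 : ((m + 1 - 1 : ℕ) : ℝ) = (m : ℝ) := by push_cast; ring
    have hc2 : ((m - 1 : ℕ) : ℝ) = (m : ℝ) - 1 := by
      have : (1:ℕ) ≤ m := by omega
      push_cast [this]; ring
    rw [hc1]
    push_cast
    rw [hc2] at ih
    have key : (m : ℝ) * (2 * (m+1) + 16) * (4/7) ≤ ((m:ℝ) - 1) * (2 * m + 16) := by
      have hm6 : (6:ℝ) ≤ (m:ℝ) := by exact_mod_cast hm
      nlinarith
    calc (m : ℝ) * (2 * (↑m + 1) + 16) * (4 / 7) ^ (m + 1)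
        = ((m : ℝ) * (2 * (m+1) + 16) * (4/7)) * (4/7)^m := by ring
      _ ≤ (((m:ℝ) - 1) * (2 * m + 16)) * (4/7)^m := by
          apply mul_le_mul_of_nonneg_right key (by positivity)
      _ ≤ 5.6 := ih

lemma analytic (m : ℕ) :
    ∑ j ∈ range (m + 1), (m.choose j : ℝ) * (1 / 2) ^ (j * (m - j)) ≤ 2 + 5.6 * (7 / 8) ^ m := by
  rcases lt_or_ge m 6 with hm | hm
  · interval_cases m <;>
      · simp [Finset.sum_range_succ]
        norm_num [Nat.choose]
  · -- m ≥ 6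
    have h1 : ∑ j ∈ range (m + 1), (m.choose j : ℝ) * (1 / 2) ^ (j * (m - j))
        = 1 + (∑ i ∈ range (m - 1), (m.choose (i+1) : ℝ) * (1 / 2) ^ ((i+1) * (m - (i+1)))) + 1 := by
      have hm1 : m - 1 + 1 = m := by omega
      rw [Finset.sum_range_succ, ← hm1, Finset.sum_range_succ']
      simp [Nat.choose_self, Nat.choose_zero_right, hm1]
      ring
    rw [h1]
    have hb : (0:ℝ) ≤ (2 * (m:ℝ) + 16) * (1 / 2) ^ m := by positivity
    have hterm : ∀ i ∈ range (m - 1),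
        (m.choose (i+1) : ℝ) * (1 / 2) ^ ((i+1) * (m - (i+1)))
          ≤ (2 * (m:ℝ) + 16) * (1 / 2) ^ m := by
      intro i hi
      have him : i + 1 ≤ m - 1 := by
        have := mem_range.1 hi; omega
      have hedge : ∀ (hch : m.choose (i+1) = m) (hexp : (i+1) * (m - (i+1)) = m - 1),
          (m.choose (i+1) : ℝ) * (1 / 2) ^ ((i+1) * (m - (i+1)))
            ≤ (2 * (m:ℝ) + 16) * (1 / 2) ^ m := by
        intro hch hexp
        rw [hch, hexp]
        have hm1 : m = (m - 1) + 1 := by omega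
        have : ((1:ℝ)/2) ^ m = (1/2) ^ (m-1) * (1/2) := by
          conv_lhs => rw [hm1]
          rw [pow_succ]
        rw [this]
        have hp : (0:ℝ) ≤ (1/2:ℝ) ^ (m-1) := by positivity
        nlinarith [Nat.cast_nonneg (α := ℝ) m]
      rcases eq_or_ne (i+1) 1 with hj1 | hjne1
      · exact hedge (by rw [hj1, Nat.choose_one_right]) (by rw [hj1]; omega)
      · rcases eq_or_ne (i+1) (m-1) with hjm | hjnem
        · refine hedge ?_ ?_
          · rw [hjm, show m - 1 = m - 1 from rfl]
            rw [Nat.choose_symm (by omega : 1 ≤ m), Nat.choose_one_right]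
          · rw [hjm]
            have h2 : m - (m - 1) = 1 := by omega
            rw [h2]; omega
        · -- middle: 2 ≤ i+1 ≤ m-2
          have h2j : 2 ≤ i + 1 := by omega
          have hjm2 : i + 1 ≤ m - 2 := by omega
          have hexp : 2 * m - 4 ≤ (i+1) * (m - (i+1)) := by
            obtain ⟨j2, hj2⟩ : ∃ t, i + 1 = t + 2 := ⟨i - 1, by omega⟩
            obtain ⟨e2, he2⟩ : ∃ t, m - (i+1) = t + 2 := ⟨m - (i+1) - 2, by omega⟩
            have hprod : (j2+2)*(e2+2) = j2*e2 + 2*j2 + 2*e2 + 4 := by ring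
            rw [hj2]
            rw [hj2] at he2
            rw [he2]
            have hm' : m = (j2 + 2) + (e2 + 2) := by omega
            omega
          calc (m.choose (i+1) : ℝ) * (1 / 2) ^ ((i+1) * (m - (i+1)))
              ≤ (2^m : ℝ) * (1 / 2) ^ (2*m - 4) := by
                apply mul_le_mul
                · exact_mod_cast choose_le_two_pow' m (i+1)
                · exact pow_le_pow_of_le_one (by norm_num) (by norm_num) hexp
                · positivity
                · positivity
            _ = 16 * (1 / 2) ^ m := by
                have e1 : ((1:ℝ)/2) ^ (2*m - 4) * (1/2)^4 = (1/2)^(2*m) := by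
                  rw [← pow_add]; congr 1; omega
                have h2m : ((1:ℝ)/2) ^ (2*m) = ((1:ℝ)/2)^m * (1/2)^m := by
                  rw [← pow_add]; congr 1; ring
                have h16 : ((1:ℝ)/2:ℝ)^4 = 1/16 := by norm_num
                rw [h16, h2m] at e1
                have hpow : ((1:ℝ)/2) ^ (2*m-4) = 16 * ((1:ℝ)/2)^m * (1/2)^m := by
                  linarith
                rw [hpow]
                have h2pm : (2:ℝ)^m * ((1:ℝ)/2)^m = 1 := by
                  rw [← mul_pow]; norm_num
                calc (2^m : ℝ) * (16 * ((1:ℝ)/2)^m * (1/2)^m)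
                    = 16 * ((2:ℝ)^m * ((1:ℝ)/2)^m) * (1/2)^m := by ring
                  _ = 16 * (1/2)^m := by rw [h2pm]; ring
            _ ≤ (2 * (m:ℝ) + 16) * (1 / 2) ^ m := by
                have : (0:ℝ) ≤ (m:ℝ) := Nat.cast_nonneg m
                have hp : (0:ℝ) ≤ ((1:ℝ)/2)^m := by positivity
                nlinarith
    have hsum : (∑ i ∈ range (m - 1), (m.choose (i+1) : ℝ) * (1 / 2) ^ ((i+1) * (m - (i+1))))
        ≤ ((m - 1 : ℕ) : ℝ) * ((2 * (m:ℝ) + 16) * (1 / 2) ^ m) := by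
      calc (∑ i ∈ range (m - 1), (m.choose (i+1) : ℝ) * (1 / 2) ^ ((i+1) * (m - (i+1))))
          ≤ (range (m-1)).card • ((2 * (m:ℝ) + 16) * (1 / 2) ^ m) :=
            Finset.sum_le_card_nsmul _ _ _ hterm
        _ = ((m - 1 : ℕ) : ℝ) * ((2 * (m:ℝ) + 16) * (1 / 2) ^ m) := by
            rw [Finset.card_range, nsmul_eq_mul]
    have hfin : ((m - 1 : ℕ) : ℝ) * ((2 * (m:ℝ) + 16) * (1 / 2) ^ m) ≤ 5.6 * (7/8)^m := by
      have hhalf : ((1:ℝ)/2) ^ m = (4/7:ℝ)^m * (7/8:ℝ)^m := by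
        rw [← mul_pow]; norm_num
      rw [hhalf]
      calc ((m - 1 : ℕ) : ℝ) * ((2 * (m:ℝ) + 16) * ((4/7:ℝ)^m * (7/8:ℝ)^m))
          = (((m - 1 : ℕ) : ℝ) * (2 * (m:ℝ) + 16) * (4/7:ℝ)^m) * (7/8:ℝ)^m := by ring
        _ ≤ 5.6 * (7/8:ℝ)^m := by
            apply mul_le_mul_of_nonneg_right (decay m hm) (by positivity)
    linarith

lemma cover {n : ℕ} (a s : Fin n) (has : a ≠ s) (ω : Orient n) (hA : ¬ reaches ω a s) :
    ∃ S₀ ∈ (Finset.univ \ {a, s} : Finset (Fin n)).powerset, cutE (insert a S₀) ω := by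
  classical
  refine ⟨(Finset.univ \ {a, s}).filter (fun v => reaches ω a v), mem_powerset.2 (filter_subset _ _), ?_⟩
  intro u hu w hw
  have hune : u ≠ w := fun h => hw (h ▸ hu)
  have hnd : ¬ dir ω u w := by
    intro hd
    have hru : reaches ω a w := by
      rcases Finset.mem_insert.1 hu with rfl | hu'
      · exact Relation.TransGen.single hd
      · exact Relation.TransGen.tail ((Finset.mem_filter.1 hu').2) hd
    have hwa : w ≠ a := by rintro rfl; exact hw (Finset.mem_insert_self _ _)
    have hws : w ≠ s := fun h => hA (h ▸ hru)
    apply hw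
    apply Finset.mem_insert_of_mem
    refine Finset.mem_filter.2 ⟨Finset.mem_sdiff.2 ⟨Finset.mem_univ _, ?_⟩, hru⟩
    simp [hwa, hws]
  rcases dir_total ω hune.symm with h | h
  · exact h
  · exact absurd h hnd

theorem no_path_prob_upper (n : ℕ) (hn : 2 ≤ n) (a s : Fin n) (has : a ≠ s) :
    Pr n (fun ω => ¬ reaches ω a s) ≤
      ((1 : ℝ) / 2) ^ (n - 2) * (1 + 3.2 * (7 / 8) ^ (n - 1)) := by
  classical
  set m := n - 2 with hm
  set V := (Finset.univ \ {a, s} : Finset (Fin n)) with hV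
  have hVcard : V.card = m := by
    rw [hV, Finset.card_sdiff_of_subset (Finset.subset_univ _), Finset.card_univ, Fintype.card_fin]
    have : ({a, s} : Finset (Fin n)).card = 2 := by
      rw [Finset.card_insert_of_notMem (by simp [has]), Finset.card_singleton]
    omega
  have step1 : Pr n (fun ω => ¬ reaches ω a s)
      ≤ ∑ S₀ ∈ V.powerset, Pr n (cutE (insert a S₀)) :=
    Pr_union_le n V.powerset (fun S₀ => cutE (insert a S₀)) _ (cover a s has)
  have step2 : ∑ S₀ ∈ V.powerset, Pr n (cutE (insert a S₀))
      = ∑ S₀ ∈ V.powerset, ((1:ℝ)/2) ^ ((S₀.card + 1) * (n - (S₀.card + 1))) := by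
    apply Finset.sum_congr rfl
    intro S₀ hS₀
    have haS : a ∉ S₀ := by
      intro h
      have := (mem_powerset.1 hS₀) h
      simp [hV] at this
    rw [Pr_cutE, Finset.card_insert_of_notMem haS]
  have step3 : ∑ S₀ ∈ V.powerset, ((1:ℝ)/2) ^ ((S₀.card + 1) * (n - (S₀.card + 1)))
      = ∑ j ∈ range (m + 1), (m.choose j : ℝ) * ((1:ℝ)/2) ^ ((j + 1) * (n - (j + 1))) := by
    rw [Finset.sum_powerset_apply_card (fun j => ((1:ℝ)/2) ^ ((j + 1) * (n - (j + 1))))]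
    rw [hVcard]
    apply Finset.sum_congr rfl
    intro j _
    rw [nsmul_eq_mul]
  have hexp : ∀ j ∈ range (m + 1), (j + 1) * (n - (j + 1)) = (m + 1) + j * (m - j) := by
    intro j hj
    have hjm : j ≤ m := by have := mem_range.1 hj; omega
    obtain ⟨d, hd⟩ : ∃ d, m = j + d := ⟨m - j, by omega⟩
    have hn' : n = m + 2 := by omega
    have h1 : n - (j + 1) = d + 1 := by omega
    have h2 : m - j = d := by omega
    rw [h1, h2, hd]
    ring
  have step4 : ∑ j ∈ range (m + 1), (m.choose j : ℝ) * ((1:ℝ)/2) ^ ((j + 1) * (n - (j + 1)))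
      = ((1:ℝ)/2) ^ (m + 1) * ∑ j ∈ range (m + 1), (m.choose j : ℝ) * ((1:ℝ)/2) ^ (j * (m - j)) := by
    rw [Finset.mul_sum]
    apply Finset.sum_congr rfl
    intro j hj
    rw [hexp j hj, pow_add]
    ring
  have hT := analytic m
  have hfinal : ((1:ℝ)/2) ^ (m + 1) * (2 + 5.6 * (7/8) ^ m)
      = ((1 : ℝ) / 2) ^ (n - 2) * (1 + 3.2 * (7 / 8) ^ (n - 1)) := by
    have h1 : n - 2 = m := hm.symm
    have h2 : n - 1 = m + 1 := by omega
    rw [h1, h2, pow_succ, pow_succ]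
    ring_nf
  calc Pr n (fun ω => ¬ reaches ω a s)
      ≤ ∑ S₀ ∈ V.powerset, Pr n (cutE (insert a S₀)) := step1
    _ = ((1:ℝ)/2) ^ (m + 1) * ∑ j ∈ range (m + 1), (m.choose j : ℝ) * ((1:ℝ)/2) ^ (j * (m - j)) := by
        rw [step2, step3, step4]
    _ ≤ ((1:ℝ)/2) ^ (m + 1) * (2 + 5.6 * (7/8) ^ m) := by
        apply mul_le_mul_of_nonneg_left hT (by positivity)
    _ = ((1 : ℝ) / 2) ^ (n - 2) * (1 + 3.2 * (7 / 8) ^ (n - 1)) := hfinal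
end

section
/- In a uniformly random orientation of the graph on vertex set {a, s, b, v} with edges {a,s}, {s,b}, {a,v}, {s,v}, {b,v} (i.e., K_4 minus the edge {a,b}), the events C = {there is a directed path from a to s} and D = {there is a directed path from s to b} satisfy P(C) = P(D) = 21/32, P(C ∩ D) = 7/16, and hence P(C∩D) − P(C)P(D) = 7/1024 > 0. -/
section
variable {α : Type*} [Fintype α] [DecidableEq α] (r : α → α → Prop) [DecidableRel r]

def rstep (S : Finset α) : Finset α :=
  S ∪ Finset.univ.filter (fun b => ∃ a ∈ S, r a b)

lemma subset_rstep (S : Finset α) : S ⊆ rstep r S := Finset.subset_union_left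

lemma subset_rstep_iterate (S : Finset α) (k : ℕ) : S ⊆ (rstep r)^[k] S := by
  induction k with
  | zero => simp
  | succ k ih =>
    rw [Function.iterate_succ_apply']
    exact ih.trans (subset_rstep r _)

lemma exists_fix (S : Finset α) :
    ∃ k ≤ Fintype.card α, rstep r ((rstep r)^[k] S) = (rstep r)^[k] S := by
  by_contra h
  push_neg at h
  have key : ∀ k ≤ Fintype.card α + 1, k ≤ ((rstep r)^[k] S).card := by
    intro k hk
    induction k with
    | zero => simp
    | succ k ih =>
      have h1 : (rstep r)^[k] S ⊂ (rstep r)^[k + 1] S := by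
        rw [Function.iterate_succ_apply']
        exact (subset_rstep r _).ssubset_of_ne (h k (by omega)).symm
      have := Finset.card_lt_card h1
      have := ih (by omega)
      omega
  have := key (Fintype.card α + 1) le_rfl
  have h2 := Finset.card_le_univ ((rstep r)^[Fintype.card α + 1] S)
  omega

lemma fix_at_card (S : Finset α) :
    rstep r ((rstep r)^[Fintype.card α] S) = (rstep r)^[Fintype.card α] S := by
  obtain ⟨k, hk, hfix⟩ := exists_fix r S
  have h1 : (rstep r)^[Fintype.card α] S = (rstep r)^[k] S := by
    have : (rstep r)^[Fintype.card α] S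
        = (rstep r)^[Fintype.card α - k] ((rstep r)^[k] S) := by
      rw [← Function.iterate_add_apply]
      congr 1
      omega
    rw [this, Function.iterate_fixed hfix]
  rw [h1, hfix]

theorem transGen_iff_mem (a b : α) :
    Relation.TransGen r a b ↔
      b ∈ (rstep r)^[Fintype.card α] (Finset.univ.filter (r a)) := by
  constructor
  · intro h
    induction h with
    | single hab =>
      exact subset_rstep_iterate r _ _ (Finset.mem_filter.2 ⟨Finset.mem_univ _, hab⟩)
    | tail hab hbc ih =>
      rw [← fix_at_card r]
      exact Finset.mem_union_right _
        (Finset.mem_filter.2 ⟨Finset.mem_univ _, _, ih, hbc⟩)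
  · suffices h : ∀ k, ∀ b ∈ (rstep r)^[k] (Finset.univ.filter (r a)),
        Relation.TransGen r a b from h _ b
    intro k
    induction k with
    | zero =>
      intro b hb
      exact Relation.TransGen.single (Finset.mem_filter.1 hb).2
    | succ k ih =>
      intro b hb
      rw [Function.iterate_succ_apply'] at hb
      rcases Finset.mem_union.1 hb with hb | hb
      · exact ih b hb
      · obtain ⟨-, c, hc, hcb⟩ := Finset.mem_filter.1 hb
        exact (ih c hc).tail hcb

instance decidableTransGen : DecidableRel (Relation.TransGen r) := fun a b =>
  decidable_of_iff' _ (transGen_iff_mem r a b)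

end



/-- An orientation of the graph `G`: each edge `{i,j}` with `i < j` gets a direction;
`ω ⟨(i,j),h⟩ = true` means the edge is oriented `i → j`. Under the uniform probability
`PrG` every edge is independently oriented each way with probability `1/2`. -/
abbrev GOrient {n : ℕ} (G : SimpleGraph (Fin n)) [DecidableRel G.Adj] : Type :=
  {p : Fin n × Fin n // p.1 < p.2 ∧ G.Adj p.1 p.2} → Bool

/-- The edge between `i` and `j` exists and is oriented from `i` to `j`. -/
def gdir {n : ℕ} {G : SimpleGraph (Fin n)} [DecidableRel G.Adj] (ω : GOrient G)
    (i j : Fin n) : Prop :=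
  (∃ h : i < j ∧ G.Adj i j, ω ⟨(i, j), h⟩ = true) ∨
  (∃ h : j < i ∧ G.Adj j i, ω ⟨(j, i), h⟩ = false)

/-- There is a directed path from `a` to `s` in the orientation `ω`. -/
def greaches {n : ℕ} {G : SimpleGraph (Fin n)} [DecidableRel G.Adj] (ω : GOrient G)
    (a s : Fin n) : Prop :=
  Relation.TransGen (gdir ω) a s

/-- The probability of the event `E` for a uniformly random orientation of `G`. -/
noncomputable def PrG {n : ℕ} (G : SimpleGraph (Fin n)) [DecidableRel G.Adj]
    (E : GOrient G → Prop) : ℝ :=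
  haveI := Classical.decPred E
  ((Finset.univ.filter E).card : ℝ) / (Fintype.card (GOrient G) : ℝ)

/-- `K₄` minus the edge `{a, b}`, with `a = 0`, `s = 1`, `b = 2`, `v = 3`:
the edges are `{a,s}, {s,b}, {a,v}, {s,v}, {b,v}`. -/
def G14 : SimpleGraph (Fin 4) where
  Adj i j := i ≠ j ∧ ¬((i = 0 ∧ j = 2) ∨ (i = 2 ∧ j = 0))
  symm := by constructor; intro i j h; exact ⟨h.1.symm, by tauto⟩
  loopless := by constructor; intro i h; exact h.1 rfl

instance : DecidableRel G14.Adj := fun i j =>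
  decidable_of_iff (i ≠ j ∧ ¬((i = 0 ∧ j = 2) ∨ (i = 2 ∧ j = 0))) Iff.rfl

instance gdirDec {ω : GOrient G14} : DecidableRel (gdir ω) := fun i j => by
  unfold gdir; infer_instance

instance greachesDec {ω : GOrient G14} (a b : Fin 4) : Decidable (greaches ω a b) :=
  decidableTransGen (gdir ω) a b

lemma PrG_eq {n : ℕ} (G : SimpleGraph (Fin n)) [DecidableRel G.Adj]
    (E : GOrient G → Prop) [DecidablePred E] :
    PrG G E = ((Finset.univ.filter E).card : ℝ) / (Fintype.card (GOrient G) : ℝ) := by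
  unfold PrG
  rw [Finset.filter_congr_decidable]

lemma cardGOrient : Fintype.card (GOrient G14) = 32 := by decide

lemma cardC : (Finset.univ.filter (fun ω : GOrient G14 => greaches ω 0 1)).card = 21 := by
  decide

lemma cardD : (Finset.univ.filter (fun ω : GOrient G14 => greaches ω 1 2)).card = 21 := by
  decide

lemma cardCD : (Finset.univ.filter
    (fun ω : GOrient G14 => greaches ω 0 1 ∧ greaches ω 1 2)).card = 14 := by
  decide

theorem K4_minus_ab_positive_correlation :
    PrG G14 (fun ω => greaches ω 0 1) = 21 / 32 ∧
    PrG G14 (fun ω => greaches ω 1 2) = 21 / 32 ∧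
    PrG G14 (fun ω => greaches ω 0 1 ∧ greaches ω 1 2) = 7 / 16 ∧
    PrG G14 (fun ω => greaches ω 0 1 ∧ greaches ω 1 2) -
        PrG G14 (fun ω => greaches ω 0 1) * PrG G14 (fun ω => greaches ω 1 2) =
      7 / 1024 := by
  have h1 : PrG G14 (fun ω => greaches ω 0 1) = 21 / 32 := by
    rw [PrG_eq, cardC, cardGOrient]; norm_num
  have h2 : PrG G14 (fun ω => greaches ω 1 2) = 21 / 32 := by
    rw [PrG_eq, cardD, cardGOrient]; norm_num
  have h3 : PrG G14 (fun ω => greaches ω 0 1 ∧ greaches ω 1 2) = 7 / 16 := by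
    rw [PrG_eq, cardCD, cardGOrient]; norm_num
  refine ⟨h1, h2, h3, ?_⟩
  rw [h1, h2, h3]; norm_num
end

section
/- Let n ≥ 3 and let c, d ≥ 1 with c + d ≤ n − 1. In a uniformly random orientation of the cycle C_n, with vertices a, s, b at pairwise distances c (a to s), d (s to b), and n−c−d (b to a) along the cycle, the events C = {directed path from a to s} and D = {directed path from s to b} satisfy P(C) = (1/2)^c + (1/2)^(n-c) − (1/2)^n, P(D) = (1/2)^d + (1/2)^(n-d) − (1/2)^n, and P(C∩D) = (1/2)^(c+d) + (1/2)^n. -/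
/-- The cycle graph `C_n` on `Fin n` (for `n ≥ 3`): `i` and `j` are adjacent iff they are
distinct and consecutive modulo `n`. -/
def cycleG (n : ℕ) : SimpleGraph (Fin n) where
  Adj i j := i ≠ j ∧ (j.val = (i.val + 1) % n ∨ i.val = (j.val + 1) % n)
  symm := by constructor; intro i j h; exact ⟨h.1.symm, h.2.symm⟩
  loopless := by constructor; intro i h; exact h.1 rfl

instance (n : ℕ) : DecidableRel (cycleG n).Adj := fun i j =>
  decidable_of_iff (i ≠ j ∧ (j.val = (i.val + 1) % n ∨ i.val = (j.val + 1) % n)) Iff.rfl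


section Aux

variable {n : ℕ} [NeZero n]

set_option linter.unusedSectionVars false

open Fin.NatCast Fin.CommRing

lemma finval_one (hn : 3 ≤ n) : ((1 : Fin n)).val = 1 := by
  show 1 % n = 1
  exact Nat.mod_eq_of_lt (by omega)

/-- The edge from `k` to `k+1` (mod `n`) is oriented forward. -/
def fwd (ω : GOrient (cycleG n)) (k : Fin n) : Prop := gdir ω k (k + 1)

lemma gdir_iff_lt {G : SimpleGraph (Fin n)} [DecidableRel G.Adj] (ω : GOrient G)
    {i j : Fin n} (hlt : i < j) (hadj : G.Adj i j) :
    gdir ω i j ↔ ω ⟨(i, j), ⟨hlt, hadj⟩⟩ = true := by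
  constructor
  · rintro (⟨h, hw⟩ | ⟨h, hw⟩)
    · exact hw
    · exact absurd h.1 (lt_asymm hlt)
  · intro hw; exact Or.inl ⟨⟨hlt, hadj⟩, hw⟩

lemma gdir_iff_gt {G : SimpleGraph (Fin n)} [DecidableRel G.Adj] (ω : GOrient G)
    {i j : Fin n} (hlt : j < i) (hadj : G.Adj j i) :
    gdir ω i j ↔ ω ⟨(j, i), ⟨hlt, hadj⟩⟩ = false := by
  constructor
  · rintro (⟨h, hw⟩ | ⟨h, hw⟩)
    · exact absurd h.1 (lt_asymm hlt)
    · exact hw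
  · intro hw; exact Or.inr ⟨⟨hlt, hadj⟩, hw⟩

lemma gdir_not_symm {G : SimpleGraph (Fin n)} [DecidableRel G.Adj] (ω : GOrient G)
    {i j : Fin n} (hadj : G.Adj i j) : gdir ω i j ↔ ¬ gdir ω j i := by
  have hne : i ≠ j := hadj.ne
  rcases lt_or_gt_of_ne hne with h | h
  · rw [gdir_iff_lt ω h hadj, gdir_iff_gt ω h hadj]
    simp
  · rw [gdir_iff_gt ω h hadj.symm, gdir_iff_lt ω h hadj.symm]
    simp

lemma adj_succ (hn : 3 ≤ n) (k : Fin n) : (cycleG n).Adj k (k + 1) := by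
  constructor
  · intro h
    have h2 := congrArg Fin.val h
    simp [Fin.add_def, finval_one hn] at h2
    rcases Nat.lt_or_ge (k.val + 1) n with h' | h'
    · rw [Nat.mod_eq_of_lt h'] at h2; omega
    · have hk := k.isLt
      have he : k.val + 1 = n := by omega
      rw [he, Nat.mod_self] at h2
      omega
  · left
    simp [Fin.add_def, finval_one hn]

lemma gdir_adj {G : SimpleGraph (Fin n)} [DecidableRel G.Adj] (ω : GOrient G)
    {i j : Fin n} (h : gdir ω i j) : G.Adj i j := by
  rcases h with ⟨h, _⟩ | ⟨h, _⟩
  · exact h.2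
  · exact h.2.symm

lemma adj_cases (hn : 3 ≤ n) {i j : Fin n} (h : (cycleG n).Adj i j) :
    j = i + 1 ∨ i = j + 1 := by
  rcases h.2 with h2 | h2
  · left; apply Fin.ext; simp [Fin.add_def, finval_one hn]; omega
  · right; apply Fin.ext; simp [Fin.add_def, finval_one hn]; omega

lemma gdir_cases (hn : 3 ≤ n) (ω : GOrient (cycleG n)) {i j : Fin n}
    (h : gdir ω i j) : (j = i + 1 ∧ fwd ω i) ∨ (i = j + 1 ∧ ¬ fwd ω j) := by
  rcases adj_cases hn (gdir_adj ω h) with h1 | h1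
  · left; exact ⟨h1, by rw [fwd, ← h1]; exact h⟩
  · right
    refine ⟨h1, ?_⟩
    rw [fwd, ← h1]
    exact ((gdir_not_symm ω (gdir_adj ω h)).mp h)

lemma gdir_back (hn : 3 ≤ n) (ω : GOrient (cycleG n)) {k : Fin n}
    (h : ¬ fwd ω k) : gdir ω (k + 1) k :=
  by_contra fun hc => h ((gdir_not_symm ω (adj_succ hn k)).mpr hc)

lemma reach_of_fwd (hn : 3 ≤ n) (ω : GOrient (cycleG n)) (a : Fin n) :
    ∀ t : ℕ, 1 ≤ t → (∀ m : ℕ, m < t → fwd ω (a + (m : Fin n))) →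
      greaches ω a (a + (t : Fin n)) := by
  intro t
  induction t with
  | zero => omega
  | succ t ih =>
    intro _ h
    by_cases ht : t = 0
    · subst ht
      have h0 : fwd ω a := by simpa using h 0 (by norm_num)
      rw [show a + ((0 + 1 : ℕ) : Fin n) = a + 1 by push_cast; ring]
      exact Relation.TransGen.single h0
    · have h1 : greaches ω a (a + (t : Fin n)) :=
        ih (by omega) (fun m hm => h m (by omega))
      have h2 : fwd ω (a + (t : Fin n)) := h t (Nat.lt_succ_self t)
      rw [show a + ((t + 1 : ℕ) : Fin n) = (a + (t : Fin n)) + 1 by push_cast; ring]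
      exact h1.tail h2

lemma reach_of_bwd (hn : 3 ≤ n) (ω : GOrient (cycleG n)) (s : Fin n) :
    ∀ t : ℕ, 1 ≤ t → (∀ m : ℕ, m < t → ¬ fwd ω (s + (m : Fin n))) →
      greaches ω (s + (t : Fin n)) s := by
  intro t
  induction t with
  | zero => omega
  | succ t ih =>
    intro _ h
    by_cases ht : t = 0
    · subst ht
      have h0 : ¬ fwd ω s := by simpa using h 0 (by norm_num)
      rw [show s + ((0 + 1 : ℕ) : Fin n) = s + 1 by push_cast; ring]
      exact Relation.TransGen.single (gdir_back hn ω h0)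
    · have h1 : greaches ω (s + (t : Fin n)) s :=
        ih (by omega) (fun m hm => h m (by omega))
      have h2 : ¬ fwd ω (s + (t : Fin n)) := h t (Nat.lt_succ_self t)
      rw [show s + ((t + 1 : ℕ) : Fin n) = (s + (t : Fin n)) + 1 by push_cast; ring]
      exact Relation.TransGen.head (gdir_back hn ω h2) h1

/-- Characterization of reachability in the randomly oriented cycle. -/
def ReachSpec (ω : GOrient (cycleG n)) (a s : Fin n) : Prop :=
  (∃ t : ℕ, 1 ≤ t ∧ t ≤ n ∧ s = a + (t : Fin n) ∧
      ∀ m : ℕ, m < t → fwd ω (a + (m : Fin n))) ∨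
  (∃ t : ℕ, 1 ≤ t ∧ t ≤ n ∧ a = s + (t : Fin n) ∧
      ∀ m : ℕ, m < t → ¬ fwd ω (s + (m : Fin n)))

lemma reach_iff (hn : 3 ≤ n) (ω : GOrient (cycleG n)) (a s : Fin n) :
    greaches ω a s ↔ ReachSpec ω a s := by
  constructor
  · intro hr
    refine Relation.TransGen.head_induction_on hr ?_ ?_
    · intro a' h
      rcases gdir_cases hn ω h with ⟨h1, h2⟩ | ⟨h1, h2⟩
      · left
        exact ⟨1, le_refl 1, by omega, by rw [Nat.cast_one]; exact h1,
          fun m hm => by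
            interval_cases m
            simpa using h2⟩
      · right
        exact ⟨1, le_refl 1, by omega, by rw [Nat.cast_one]; exact h1,
          fun m hm => by
            interval_cases m
            simpa using h2⟩
    · intro a' c' h' hTG ihp
      rcases gdir_cases hn ω h' with ⟨hc, hf⟩ | ⟨hc, hnf⟩
      · -- c' = a' + 1, fwd ω a'
        rcases ihp with ⟨t, ht1, htn, hs, hall⟩ | ⟨t, ht1, htn, ha, hall⟩
        · by_cases htn' : t = n
          · -- whole cycle case: s = c'
            subst htn'
            have hs' : s = c' := by
              rw [hs, Fin.natCast_self, add_zero]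
            left
            refine ⟨1, le_refl 1, by omega, ?_, ?_⟩
            · rw [Nat.cast_one, ← hc, ← hs']
            · intro m hm
              interval_cases m
              simpa using hf
          · left
            refine ⟨t + 1, by omega, by omega, ?_, ?_⟩
            · rw [hs, hc]; push_cast; ring
            · intro m hm
              match m with
              | 0 => simpa using hf
              | (m' + 1) =>
                have := hall m' (by omega)
                rw [hc] at this
                have he : a' + ((m' + 1 : ℕ) : Fin n) = a' + 1 + (m' : Fin n) := by
                  push_cast; ring
                rw [he]
                exact this
        · -- contradiction: a' is on the backward arc but fwd ω a'
          exfalso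
          have key : a' = s + ((t - 1 : ℕ) : Fin n) := by
            have h1 : a' + 1 = s + (t : Fin n) := by rw [← ha, hc]
            rw [Nat.cast_sub ht1, Nat.cast_one]
            linear_combination h1
          exact (by rw [key] at hf; exact hall (t - 1) (by omega) hf)
      · -- a' = c' + 1, ¬ fwd ω c'
        rcases ihp with ⟨t, ht1, htn, hs, hall⟩ | ⟨t, ht1, htn, ha, hall⟩
        · exfalso
          have := hall 0 (by omega)
          simp only [Nat.cast_zero, add_zero] at this
          exact hnf this
        · by_cases htn' : t = n
          · subst htn'
            have hc' : c' = s := by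
              rw [ha, Fin.natCast_self, add_zero]
            right
            refine ⟨1, le_refl 1, by omega, ?_, ?_⟩
            · rw [Nat.cast_one, hc, hc']
            · intro m hm
              interval_cases m
              simp only [Nat.cast_zero, add_zero]
              rw [← hc']
              exact hnf
          · right
            refine ⟨t + 1, by omega, by omega, ?_, ?_⟩
            · rw [hc, ha]; push_cast; ring
            · intro m hm
              by_cases hmt : m = t
              · subst hmt
                rw [← ha]
                exact hnf
              · exact hall m (by omega)
  · rintro (⟨t, ht1, htn, hs, hall⟩ | ⟨t, ht1, htn, ha, hall⟩)
    · rw [hs]; exact reach_of_fwd hn ω a t ht1 hall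
    · rw [ha]; exact reach_of_bwd hn ω s t ht1 hall


lemma succ_val (hn : 3 ≤ n) (k : Fin n) : (k + 1).val = (k.val + 1) % n := by
  simp [Fin.add_def, finval_one hn]

lemma lt_succ_of (hn : 3 ≤ n) {k : Fin n} (hk : k.val + 1 < n) : k < k + 1 := by
  show k.val < (k + 1).val
  rw [succ_val hn, Nat.mod_eq_of_lt hk]
  omega

lemma succ_lt_of_last (hn : 3 ≤ n) {k : Fin n} (hk : k.val = n - 1) : k + 1 < k := by
  show (k + 1).val < k.val
  rw [succ_val hn, hk, show n - 1 + 1 = n by omega, Nat.mod_self]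
  omega

lemma fwd_iff_small (hn : 3 ≤ n) (ω : GOrient (cycleG n)) {k : Fin n} (hk : k.val + 1 < n) :
    fwd ω k ↔ ω ⟨(k, k + 1), ⟨lt_succ_of hn hk, adj_succ hn k⟩⟩ = true :=
  gdir_iff_lt ω (lt_succ_of hn hk) (adj_succ hn k)

lemma fwd_iff_last (hn : 3 ≤ n) (ω : GOrient (cycleG n)) {k : Fin n} (hk : k.val = n - 1) :
    fwd ω k ↔ ω ⟨(k + 1, k), ⟨succ_lt_of_last hn hk, (adj_succ hn k).symm⟩⟩ = false :=
  gdir_iff_gt ω (succ_lt_of_last hn hk) ((adj_succ hn k).symm)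

/-- The forward-orientation indicator of each cycle edge. -/
noncomputable def Phi (ω : GOrient (cycleG n)) : Fin n → Bool :=
  fun k => @ite _ (fwd ω k) (Classical.propDecidable _) true false

lemma phi_true {ω : GOrient (cycleG n)} {k : Fin n} : Phi ω k = true ↔ fwd ω k := by
  by_cases h : fwd ω k <;> simp [Phi, h]

lemma phi_false {ω : GOrient (cycleG n)} {k : Fin n} : Phi ω k = false ↔ ¬ fwd ω k := by
  by_cases h : fwd ω k <;> simp [Phi, h]

lemma edge_cases (hn : 3 ≤ n)
    (e : {p : Fin n × Fin n // p.1 < p.2 ∧ (cycleG n).Adj p.1 p.2}) :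
    e.1.2.val = e.1.1.val + 1 ∨ (e.1.1.val = 0 ∧ e.1.2.val = n - 1) := by
  obtain ⟨⟨i, j⟩, hlt, hadj⟩ := e
  show j.val = i.val + 1 ∨ (i.val = 0 ∧ j.val = n - 1)
  have hij : i.val < j.val := hlt
  have hj := j.isLt
  have hi := i.isLt
  have hadj2 : j.val = (i.val + 1) % n ∨ i.val = (j.val + 1) % n := hadj.2
  rcases hadj2 with h | h
  · left
    rcases Nat.lt_or_ge (i.val + 1) n with h' | h'
    · rw [Nat.mod_eq_of_lt h'] at h; omega
    · have he : i.val + 1 = n := by omega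
      rw [he, Nat.mod_self] at h; omega
  · right
    rcases Nat.lt_or_ge (j.val + 1) n with h' | h'
    · rw [Nat.mod_eq_of_lt h'] at h; omega
    · have he : j.val + 1 = n := by omega
      rw [he, Nat.mod_self] at h
      omega

lemma omega_eq_A (hn : 3 ≤ n) (ω : GOrient (cycleG n))
    (e : {p : Fin n × Fin n // p.1 < p.2 ∧ (cycleG n).Adj p.1 p.2})
    (h : e.1.2.val = e.1.1.val + 1) : ω e = Phi ω e.1.1 := by
  have hk : e.1.1.val + 1 < n := by have := e.1.2.isLt; omega
  have he : e.1.2 = e.1.1 + 1 := Fin.ext (by rw [succ_val hn, Nat.mod_eq_of_lt hk]; exact h)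
  have hee : e = ⟨(e.1.1, e.1.1 + 1), ⟨lt_succ_of hn hk, adj_succ hn e.1.1⟩⟩ :=
    Subtype.ext (Prod.ext_iff.mpr ⟨rfl, he⟩)
  rw [Bool.eq_iff_iff, phi_true, fwd_iff_small hn ω hk, ← hee]

lemma omega_eq_B (hn : 3 ≤ n) (ω : GOrient (cycleG n))
    (e : {p : Fin n × Fin n // p.1 < p.2 ∧ (cycleG n).Adj p.1 p.2})
    (h : e.1.1.val = 0 ∧ e.1.2.val = n - 1) : ω e = !Phi ω e.1.2 := by
  have hz : (e.1.2 + 1).val = 0 := by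
    rw [succ_val hn, h.2, show n - 1 + 1 = n by omega, Nat.mod_self]
  have he : e.1.1 = e.1.2 + 1 := Fin.ext (by rw [hz]; exact h.1)
  have hee : e = ⟨(e.1.2 + 1, e.1.2), ⟨succ_lt_of_last hn h.2, (adj_succ hn e.1.2).symm⟩⟩ :=
    Subtype.ext (Prod.ext_iff.mpr ⟨he, rfl⟩)
  have h1 : fwd ω e.1.2 ↔ ω e = false := by rw [fwd_iff_last hn ω h.2, ← hee]
  by_cases hf : fwd ω e.1.2
  · rw [h1.mp hf, phi_true.mpr hf]; rfl
  · have h2 : ω e ≠ false := fun hh => hf (h1.mpr hh)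
    rw [Bool.ne_false_iff] at h2
    rw [h2, phi_false.mpr hf]; rfl

lemma phi_inj (hn : 3 ≤ n) : Function.Injective (Phi (n := n)) := by
  intro ω ω' h
  funext e
  rcases edge_cases hn e with hA | hB
  · rw [omega_eq_A hn ω e hA, omega_eq_A hn ω' e hA, h]
  · rw [omega_eq_B hn ω e hB, omega_eq_B hn ω' e hB, h]

lemma phi_surj (hn : 3 ≤ n) : Function.Surjective (Phi (n := n)) := by
  intro f
  refine ⟨fun e => if e.1.2.val = e.1.1.val + 1 then f e.1.1 else !f e.1.2,
    funext fun k => ?_⟩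
  rcases Nat.lt_or_ge (k.val + 1) n with hk | hk
  · have hA := omega_eq_A hn (fun e => if e.1.2.val = e.1.1.val + 1 then f e.1.1 else !f e.1.2)
      ⟨(k, k + 1), ⟨lt_succ_of hn hk, adj_succ hn k⟩⟩
      (by show (k + 1).val = k.val + 1; rw [succ_val hn]; exact Nat.mod_eq_of_lt hk)
    dsimp only at hA
    rw [← hA, if_pos (by rw [succ_val hn]; exact Nat.mod_eq_of_lt hk)]
  · have hk' : k.val = n - 1 := by have := k.isLt; omega
    have hz : (k + 1).val = 0 := by
      rw [succ_val hn, hk', show n - 1 + 1 = n by omega, Nat.mod_self]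
    have hB := omega_eq_B hn (fun e => if e.1.2.val = e.1.1.val + 1 then f e.1.1 else !f e.1.2)
      ⟨(k + 1, k), ⟨succ_lt_of_last hn hk', (adj_succ hn k).symm⟩⟩ ⟨hz, hk'⟩
    dsimp only at hB
    rw [if_neg (by rw [hz]; omega)] at hB
    exact (Bool.not_inj hB).symm

/-- Orientations of the cycle correspond to functions `Fin n → Bool`. -/
noncomputable def PhiEquiv (hn : 3 ≤ n) : GOrient (cycleG n) ≃ (Fin n → Bool) :=
  Equiv.ofBijective _ ⟨phi_inj hn, phi_surj hn⟩

lemma card_GOrient (hn : 3 ≤ n) : Fintype.card (GOrient (cycleG n)) = 2 ^ n := by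
  rw [Fintype.card_congr (PhiEquiv hn)]
  simp

lemma card_filter_eq (hn : 3 ≤ n) (E : GOrient (cycleG n) → Prop)
    (E' : (Fin n → Bool) → Prop) [DecidablePred E] [DecidablePred E']
    (hEE : ∀ ω, E ω ↔ E' (Phi ω)) :
    (Finset.univ.filter E).card = (Finset.univ.filter E').card := by
  rw [← Fintype.card_subtype, ← Fintype.card_subtype]
  exact Fintype.card_congr ((PhiEquiv hn).subtypeEquiv (fun ω => hEE ω))


lemma card_fixed_s16 (S : Finset (Fin n)) (g : Fin n → Bool) :
    (Finset.univ.filter (fun f : Fin n → Bool => ∀ k ∈ S, f k = g k)).card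
      = 2 ^ (n - S.card) := by
  classical
  rw [← Fintype.card_subtype]
  have e : {f : Fin n → Bool // ∀ k ∈ S, f k = g k} ≃ ((Sᶜ : Finset (Fin n)) → Bool) :=
    { toFun := fun f k => f.1 k.1
      invFun := fun h => ⟨fun k => if hk : k ∈ S then g k else h ⟨k, Finset.mem_compl.mpr hk⟩,
        fun k hk => by simp [hk]⟩
      left_inv := fun f => Subtype.ext (funext fun k => by
        by_cases hk : k ∈ S
        · simp [hk, f.2 k hk]
        · simp [hk])
      right_inv := fun h => funext fun k => by
        have hk : k.1 ∉ S := Finset.mem_compl.mp k.2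
        simp [hk] }
  rw [Fintype.card_congr e]
  simp [Finset.card_compl]

lemma card_cond (P : Fin n → Prop) [DecidablePred P] (g : Fin n → Bool) :
    (Finset.univ.filter (fun f : Fin n → Bool => ∀ k, P k → f k = g k)).card
      = 2 ^ (n - (Finset.univ.filter P).card) := by
  classical
  have h1 : Finset.univ.filter (fun f : Fin n → Bool => ∀ k, P k → f k = g k)
      = Finset.univ.filter (fun f => ∀ k ∈ Finset.univ.filter P, f k = g k) := by
    apply Finset.filter_congr
    intro f _
    simp
  rw [h1, card_fixed_s16]

lemma card_val_set (P : ℕ → Prop) [DecidablePred P] :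
    (Finset.univ.filter (fun k : Fin n => P k.val)).card
      = ((Finset.range n).filter P).card := by
  refine Finset.card_bij (fun k _ => k.val) ?_ ?_ ?_
  · intro a ha
    simp only [Finset.mem_filter, Finset.mem_univ, true_and] at ha
    simp only [Finset.mem_filter, Finset.mem_range]
    exact ⟨a.isLt, ha⟩
  · intro a _ b _ h
    exact Fin.ext h
  · intro b hb
    simp only [Finset.mem_filter, Finset.mem_range] at hb
    exact ⟨⟨b, hb.1⟩, by simp [hb.2], rfl⟩

lemma card_val_lt {c : ℕ} (hc : c ≤ n) :
    (Finset.univ.filter (fun k : Fin n => k.val < c)).card = c := by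
  rw [card_val_set (fun x => x < c), show (Finset.range n).filter (fun x => x < c) = Finset.range c by
    ext x; simp; omega, Finset.card_range]

lemma card_val_true : (Finset.univ.filter (fun _ : Fin n => True)).card = n := by
  simp

lemma card_val_ge {c : ℕ} :
    (Finset.univ.filter (fun k : Fin n => c ≤ k.val)).card = n - c := by
  rw [card_val_set, show (Finset.range n).filter (fun x => c ≤ x) = Finset.Ico c n by
    ext x; simp [Finset.mem_Ico]; omega, Nat.card_Ico]

lemma card_val_mid {c d : ℕ} :
    (Finset.univ.filter (fun k : Fin n => c ≤ k.val ∧ k.val < c + d)).card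
      = min (c + d) n - c := by
  rw [card_val_set (fun x => c ≤ x ∧ x < c + d), show (Finset.range n).filter (fun x => c ≤ x ∧ x < c + d)
      = Finset.Ico c (min (c + d) n) by
    ext x; simp [Finset.mem_Ico]; omega, Nat.card_Ico]

lemma card_val_out {c d : ℕ} (hcd : c + d ≤ n) :
    (Finset.univ.filter (fun k : Fin n => k.val < c ∨ c + d ≤ k.val)).card = n - d := by
  classical
  have h := Finset.card_filter_add_card_filter_not
    (s := Finset.univ) (p := fun k : Fin n => k.val < c ∨ c + d ≤ k.val)
  have h2 : (Finset.univ.filter (fun k : Fin n => ¬(k.val < c ∨ c + d ≤ k.val))).card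
      = min (c + d) n - c := by
    rw [Finset.filter_congr (q := fun k : Fin n => c ≤ k.val ∧ k.val < c + d)
      (fun k _ => by constructor <;> intro <;> omega)]
    exact card_val_mid
  rw [h2] at h
  simp only [Finset.card_univ, Fintype.card_fin] at h
  omega


lemma mod2 (hn : 3 ≤ n) {x : ℕ} (h1 : n ≤ x) (h2 : x < 2 * n) : x % n = x - n := by
  rw [Nat.mod_eq_sub_mod h1, Nat.mod_eq_of_lt (by omega)]

lemma val_addcast (A : Fin n) {m : ℕ} (hm : m < n) :
    (A + (m : Fin n)).val = (A.val + m) % n := by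
  simp [Fin.add_def, Fin.val_natCast, Nat.mod_eq_of_lt hm]

lemma spec (hn : 3 ≤ n) (ω : GOrient (cycleG n)) {a s : ℕ} (ha : a < n) (hs : s < n)
    (hlt : a < s) :
    greaches ω ⟨a, ha⟩ ⟨s, hs⟩ ↔
      ((∀ k : Fin n, a ≤ k.val → k.val < s → Phi ω k = true) ∨
       (∀ k : Fin n, k.val < a ∨ s ≤ k.val → Phi ω k = false)) := by
  have hA : ((⟨a, ha⟩ : Fin n)).val = a := rfl
  have hS : ((⟨s, hs⟩ : Fin n)).val = s := rfl
  rw [reach_iff hn]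
  constructor
  · rintro (⟨u, hu1, hun, heq, hall⟩ | ⟨u, hu1, hun, heq, hall⟩)
    · -- forward arc
      have hv : s = (a + u % n) % n := by
        have h0 := congrArg Fin.val heq
        rw [hS] at h0
        rw [h0]
        simp [Fin.add_def, Fin.val_natCast]
      have hu : u = s - a := by
        rcases Nat.lt_or_ge u n with h' | h'
        · rw [Nat.mod_eq_of_lt h'] at hv
          rcases Nat.lt_or_ge (a + u) n with h'' | h''
          · rw [Nat.mod_eq_of_lt h''] at hv; omega
          · rw [mod2 hn h'' (by omega)] at hv; omega
        · have hun' : u = n := by omega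
          rw [hun', Nat.mod_self, Nat.add_zero, Nat.mod_eq_of_lt ha] at hv
          omega
      subst hu
      left
      intro k hk1 hk2
      have hm : k = (⟨a, ha⟩ : Fin n) + ((k.val - a : ℕ) : Fin n) := by
        apply Fin.ext
        rw [val_addcast _ (by omega), hA]
        rw [show a + (k.val - a) = k.val by omega, Nat.mod_eq_of_lt k.isLt]
      rw [phi_true, hm]
      exact hall (k.val - a) (by omega)
    · -- backward arc
      have hv : a = (s + u % n) % n := by
        have h0 := congrArg Fin.val heq
        rw [hA] at h0
        rw [h0]
        simp [Fin.add_def, Fin.val_natCast]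
      have hu : u = n - (s - a) := by
        rcases Nat.lt_or_ge u n with h' | h'
        · rw [Nat.mod_eq_of_lt h'] at hv
          rcases Nat.lt_or_ge (s + u) n with h'' | h''
          · rw [Nat.mod_eq_of_lt h''] at hv; omega
          · rw [mod2 hn h'' (by omega)] at hv; omega
        · have hun' : u = n := by omega
          rw [hun', Nat.mod_self, Nat.add_zero, Nat.mod_eq_of_lt hs] at hv
          omega
      subst hu
      right
      intro k hk
      rw [phi_false]
      rcases hk with hk | hk
      · have hm : k = (⟨s, hs⟩ : Fin n) + ((k.val + n - s : ℕ) : Fin n) := by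
          apply Fin.ext
          rw [val_addcast _ (by omega), hS]
          rw [show s + (k.val + n - s) = k.val + n by omega,
            mod2 hn (by omega) (by omega)]
          omega
        rw [hm]
        exact hall _ (by omega)
      · have hm : k = (⟨s, hs⟩ : Fin n) + ((k.val - s : ℕ) : Fin n) := by
          apply Fin.ext
          rw [val_addcast _ (by omega), hS]
          rw [show s + (k.val - s) = k.val by omega, Nat.mod_eq_of_lt k.isLt]
        rw [hm]
        exact hall _ (by omega)
  · rintro (h | h)
    · left
      refine ⟨s - a, by omega, by omega, ?_, ?_⟩
      · apply Fin.ext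
        rw [val_addcast _ (by omega), hA, show a + (s - a) = s by omega,
          Nat.mod_eq_of_lt hs, hS]
      · intro m hm
        rw [← phi_true]
        have hv : ((⟨a, ha⟩ : Fin n) + (m : Fin n)).val = a + m := by
          rw [val_addcast _ (by omega), hA]
          exact Nat.mod_eq_of_lt (by omega)
        exact h _ (by rw [hv]; omega) (by rw [hv]; omega)
    · right
      refine ⟨n - (s - a), by omega, by omega, ?_, ?_⟩
      · apply Fin.ext
        rw [val_addcast _ (by omega), hS,
          show s + (n - (s - a)) = a + n by omega, mod2 hn (by omega) (by omega), hA]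
        omega
      · intro m hm
        rw [← phi_false]
        rcases Nat.lt_or_ge (s + m) n with h' | h'
        · have hv : ((⟨s, hs⟩ : Fin n) + (m : Fin n)).val = s + m := by
            rw [val_addcast _ (by omega), hS]
            exact Nat.mod_eq_of_lt h'
          exact h _ (Or.inr (by rw [hv]; omega))
        · have hv : ((⟨s, hs⟩ : Fin n) + (m : Fin n)).val = s + m - n := by
            rw [val_addcast _ (by omega), hS]
            exact mod2 hn h' (by omega)
          exact h _ (Or.inl (by rw [hv]; omega))

lemma CD_iff (hn : 3 ≤ n) {c d : ℕ} (hc : 1 ≤ c) (hd : 1 ≤ d) (hcd : c + d ≤ n - 1)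
    (f : Fin n → Bool) :
    (((∀ k : Fin n, 0 ≤ k.val → k.val < c → f k = true) ∨
        (∀ k : Fin n, k.val < 0 ∨ c ≤ k.val → f k = false)) ∧
     ((∀ k : Fin n, c ≤ k.val → k.val < c + d → f k = true) ∨
        (∀ k : Fin n, k.val < c ∨ c + d ≤ k.val → f k = false))) ↔
    ((∀ k : Fin n, k.val < c + d → f k = true) ∨ (∀ k : Fin n, f k = false)) := by
  have hk0 : ((⟨0, by omega⟩ : Fin n)).val = 0 := rfl
  have hkc : ((⟨c, by omega⟩ : Fin n)).val = c := rfl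
  constructor
  · rintro ⟨hA | hA, hB | hB⟩
    · left
      intro k hk
      rcases Nat.lt_or_ge k.val c with h' | h'
      · exact hA k (by omega) h'
      · exact hB k h' hk
    · exfalso
      have h1 := hA ⟨0, by omega⟩ (by omega) (by rw [hk0]; omega)
      have h2 := hB ⟨0, by omega⟩ (by rw [hk0]; omega)
      rw [h1] at h2
      simp at h2
    · exfalso
      have h1 := hB ⟨c, by omega⟩ (by rw [hkc]) (by rw [hkc]; omega)
      have h2 := hA ⟨c, by omega⟩ (by rw [hkc]; omega)
      rw [h1] at h2
      simp at h2
    · right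
      intro k
      rcases Nat.lt_or_ge k.val c with h' | h'
      · exact hB k (Or.inl h')
      · exact hA k (by omega)
  · rintro (h | h)
    · exact ⟨Or.inl (fun k _ hk => h k (by omega)), Or.inl (fun k _ hk => h k hk)⟩
    · exact ⟨Or.inr (fun k _ => h k), Or.inr (fun k _ => h k)⟩


lemma card_val_ico {a s : ℕ} :
    (Finset.univ.filter (fun k : Fin n => a ≤ k.val ∧ k.val < s)).card = min s n - a := by
  rw [card_val_set (fun x => a ≤ x ∧ x < s), show (Finset.range n).filter (fun x => a ≤ x ∧ x < s)
      = Finset.Ico a (min s n) by ext x; simp [Finset.mem_Ico]; omega, Nat.card_Ico]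

lemma card_val_nico {a s : ℕ} (has : a ≤ s) (hsn : s ≤ n) :
    (Finset.univ.filter (fun k : Fin n => k.val < a ∨ s ≤ k.val)).card = a + (n - s) := by
  classical
  have h := Finset.card_filter_add_card_filter_not
    (s := Finset.univ) (p := fun k : Fin n => k.val < a ∨ s ≤ k.val)
  have h2 : (Finset.univ.filter (fun k : Fin n => ¬(k.val < a ∨ s ≤ k.val))).card
      = min s n - a := by
    rw [Finset.filter_congr (q := fun k : Fin n => a ≤ k.val ∧ k.val < s)
      (fun k _ => by constructor <;> intro <;> omega)]
    exact card_val_ico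
  rw [h2] at h
  simp only [Finset.card_univ, Fintype.card_fin] at h
  omega

lemma countArc (hn : 3 ≤ n) {a s : ℕ} (has : a < s) (hsn : s ≤ n) :
    (Finset.univ.filter (fun f : Fin n → Bool =>
      (∀ k : Fin n, a ≤ k.val → k.val < s → f k = true) ∨
      (∀ k : Fin n, k.val < a ∨ s ≤ k.val → f k = false))).card + 1
    = 2 ^ (n - (s - a)) + 2 ^ (s - a) := by
  classical
  rw [Finset.filter_or]
  have e3 : (Finset.univ.filter
        (fun f : Fin n → Bool => ∀ k : Fin n, a ≤ k.val → k.val < s → f k = true) ∩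
      Finset.univ.filter
        (fun f : Fin n → Bool => ∀ k : Fin n, k.val < a ∨ s ≤ k.val → f k = false)).card
      = 1 := by
    rw [← Finset.filter_and]
    rw [Finset.filter_congr (q := fun f : Fin n → Bool =>
        ∀ k : Fin n, True → f k = (fun k : Fin n => decide (a ≤ k.val ∧ k.val < s)) k)
      (fun f _ => by
        constructor
        · rintro ⟨h1, h2⟩ k _
          by_cases hk : a ≤ k.val ∧ k.val < s
          · rw [h1 k hk.1 hk.2]; simp [hk]
          · rw [h2 k (by omega)]; simp only [eq_comm (a := false), decide_eq_false_iff_not]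
            exact hk
        · intro h
          constructor
          · intro k h1 h2
            rw [h k trivial]
            simp [h1, h2]
          · intro k hk
            rw [h k trivial]
            simp only [decide_eq_false_iff_not]
            omega)]
    rw [card_cond (fun _ : Fin n => True) (fun k : Fin n => decide (a ≤ k.val ∧ k.val < s)),
      card_val_true]
    simp
  have e2 : (Finset.univ.filter
      (fun f : Fin n → Bool => ∀ k : Fin n, k.val < a ∨ s ≤ k.val → f k = false)).card
      = 2 ^ (s - a) := by
    clear e3
    rw [Finset.filter_congr (q := fun f : Fin n → Bool =>
        ∀ k : Fin n, (k.val < a ∨ s ≤ k.val) → f k = (fun _ => false) k)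
      (fun f _ => Iff.rfl)]
    rw [card_cond (fun k : Fin n => k.val < a ∨ s ≤ k.val) (fun _ => false),
      card_val_nico (by omega) hsn]
    congr 1
    omega
  have e1 : (Finset.univ.filter
      (fun f : Fin n → Bool => ∀ k : Fin n, a ≤ k.val → k.val < s → f k = true)).card
      = 2 ^ (n - (s - a)) := by
    clear e3 e2
    rw [Finset.filter_congr (q := fun f : Fin n → Bool =>
        ∀ k : Fin n, (a ≤ k.val ∧ k.val < s) → f k = (fun _ => true) k)
      (fun f _ => by
        constructor
        · intro h k hk; exact h k hk.1 hk.2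
        · intro h k h1 h2; exact h k ⟨h1, h2⟩)]
    rw [card_cond (fun k : Fin n => a ≤ k.val ∧ k.val < s) (fun _ => true), card_val_ico]
    congr 1
    omega
  have hU := Finset.card_union_add_card_inter
    (Finset.univ.filter (fun f : Fin n → Bool => ∀ k : Fin n, a ≤ k.val → k.val < s → f k = true))
    (Finset.univ.filter (fun f : Fin n → Bool => ∀ k : Fin n, k.val < a ∨ s ≤ k.val → f k = false))
  rw [e1, e2, e3] at hU
  exact hU

lemma countCD (hn : 3 ≤ n) {m : ℕ} (hm1 : 1 ≤ m) (hmn : m ≤ n) :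
    (Finset.univ.filter (fun f : Fin n → Bool =>
      (∀ k : Fin n, k.val < m → f k = true) ∨ (∀ k : Fin n, f k = false))).card
    = 2 ^ (n - m) + 1 := by
  classical
  rw [Finset.filter_or]
  have e3 : (Finset.univ.filter
        (fun f : Fin n → Bool => ∀ k : Fin n, k.val < m → f k = true) ∩
      Finset.univ.filter (fun f : Fin n → Bool => ∀ k : Fin n, f k = false)).card = 0 := by
    rw [Finset.card_eq_zero, ← Finset.filter_and]
    rw [Finset.filter_eq_empty_iff]
    rintro f _ ⟨h1, h2⟩
    have ha := h1 ⟨0, by omega⟩ hm1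
    have hb := h2 ⟨0, by omega⟩
    rw [ha] at hb
    simp at hb
  have e2 : (Finset.univ.filter (fun f : Fin n → Bool => ∀ k : Fin n, f k = false)).card
      = 1 := by
    rw [Finset.filter_congr (q := fun f : Fin n → Bool =>
        ∀ k : Fin n, True → f k = (fun _ : Fin n => false) k)
      (fun f _ => by
        constructor
        · intro h k _; exact h k
        · intro h k; exact h k trivial)]
    rw [card_cond (fun _ : Fin n => True) (fun _ => false), card_val_true]
    simp
  have e1 : (Finset.univ.filter
      (fun f : Fin n → Bool => ∀ k : Fin n, k.val < m → f k = true)).card = 2 ^ (n - m) := by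
    rw [card_cond (fun k : Fin n => k.val < m) (fun _ => true), card_val_lt hmn]
  have hU := Finset.card_union_add_card_inter
    (Finset.univ.filter (fun f : Fin n → Bool => ∀ k : Fin n, k.val < m → f k = true))
    (Finset.univ.filter (fun f : Fin n → Bool => ∀ k : Fin n, f k = false))
  rw [e1, e2, e3] at hU
  simpa using hU

lemma PrG_eq_s16 (hn : 3 ≤ n) (E : GOrient (cycleG n) → Prop) (E' : (Fin n → Bool) → Prop)
    [DecidablePred E'] (hEE : ∀ ω, E ω ↔ E' (Phi ω)) (N : ℕ)
    (hN : (Finset.univ.filter E').card = N) :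
    PrG (cycleG n) E = (N : ℝ) / 2 ^ n := by
  unfold PrG
  rw [@card_filter_eq n _ hn E E' (Classical.decPred E) _ hEE, hN, card_GOrient hn]
  norm_cast

lemma arith1 {m : ℕ} (hm1 : 1 ≤ m) (hmn : m ≤ n) :
    (((2 ^ (n - m) + 2 ^ m - 1 : ℕ) : ℝ)) / 2 ^ n
      = (1 / 2 : ℝ) ^ m + (1 / 2) ^ (n - m) - (1 / 2) ^ n := by
  have h1 : (1:ℕ) ≤ 2 ^ (n - m) + 2 ^ m :=
    le_trans (Nat.two_pow_pos (n - m)) (Nat.le_add_right _ _)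
  have h2 : ((2 ^ (n - m) + 2 ^ m - 1 : ℕ) : ℝ) = 2 ^ (n - m) + 2 ^ m - 1 := by
    rw [Nat.cast_sub h1]
    push_cast
    ring
  rw [h2]
  have hsplit : (2:ℝ) ^ n = 2 ^ m * 2 ^ (n - m) := by
    rw [← pow_add]
    congr 1
    omega
  simp only [div_pow, one_pow]
  rw [hsplit]
  have hm0 : (2:ℝ) ^ m ≠ 0 := by positivity
  have hnm0 : (2:ℝ) ^ (n - m) ≠ 0 := by positivity
  field_simp

lemma arith3 {m : ℕ} (hmn : m ≤ n) :
    (((2 ^ (n - m) + 1 : ℕ) : ℝ)) / 2 ^ n = (1 / 2 : ℝ) ^ m + (1 / 2) ^ n := by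
  have hsplit : (2:ℝ) ^ n = 2 ^ m * 2 ^ (n - m) := by
    rw [← pow_add]
    congr 1
    omega
  push_cast
  simp only [div_pow, one_pow]
  rw [hsplit]
  have hm0 : (2:ℝ) ^ m ≠ 0 := by positivity
  have hnm0 : (2:ℝ) ^ (n - m) ≠ 0 := by positivity
  field_simp


end Aux

theorem cycle_path_probabilities (n c d : ℕ) (hn : 3 ≤ n) (hc : 1 ≤ c) (hd : 1 ≤ d)
    (hcd : c + d ≤ n - 1) :
    PrG (cycleG n) (fun ω => greaches ω ⟨0, by omega⟩ ⟨c, by omega⟩) =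
        (1 / 2 : ℝ) ^ c + (1 / 2) ^ (n - c) - (1 / 2) ^ n ∧
    PrG (cycleG n) (fun ω => greaches ω ⟨c, by omega⟩ ⟨c + d, by omega⟩) =
        (1 / 2 : ℝ) ^ d + (1 / 2) ^ (n - d) - (1 / 2) ^ n ∧
    PrG (cycleG n) (fun ω =>
        greaches ω ⟨0, by omega⟩ ⟨c, by omega⟩ ∧ greaches ω ⟨c, by omega⟩ ⟨c + d, by omega⟩) =
      (1 / 2 : ℝ) ^ (c + d) + (1 / 2) ^ n := by
  haveI : NeZero n := ⟨by omega⟩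
  have h0n : 0 < n := by omega
  have hcn : c < n := by omega
  have hcdn : c + d < n := by omega
  refine ⟨?_, ?_, ?_⟩
  · -- event C
    have hiff : ∀ ω : GOrient (cycleG n), greaches ω ⟨0, h0n⟩ ⟨c, hcn⟩ ↔
        ((∀ k : Fin n, 0 ≤ k.val → k.val < c → Phi ω k = true) ∨
         (∀ k : Fin n, k.val < 0 ∨ c ≤ k.val → Phi ω k = false)) :=
      fun ω => spec hn ω h0n hcn (by omega)
    have hc_le : c ≤ n := by omega
    have hcount := countArc (a := 0) (s := c) hn (by omega) (by omega)
    simp only [Nat.sub_zero] at hcount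
    have hN := Nat.eq_sub_of_add_eq hcount
    exact (PrG_eq_s16 hn _ _ hiff _ hN).trans (arith1 hc hc_le)
  · -- event D
    have hiff : ∀ ω : GOrient (cycleG n), greaches ω ⟨c, hcn⟩ ⟨c + d, hcdn⟩ ↔
        ((∀ k : Fin n, c ≤ k.val → k.val < c + d → Phi ω k = true) ∨
         (∀ k : Fin n, k.val < c ∨ c + d ≤ k.val → Phi ω k = false)) :=
      fun ω => spec hn ω hcn hcdn (by omega)
    have hd_le : d ≤ n := by omega
    have hdd : c + d - c = d := by omega
    have hcount := countArc (a := c) (s := c + d) hn (by omega) (by omega)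
    simp only [hdd] at hcount
    have hN := Nat.eq_sub_of_add_eq hcount
    exact (PrG_eq_s16 hn _ _ hiff _ hN).trans (arith1 hd hd_le)
  · -- event C ∩ D
    have hiff : ∀ ω : GOrient (cycleG n),
        (greaches ω ⟨0, h0n⟩ ⟨c, hcn⟩ ∧ greaches ω ⟨c, hcn⟩ ⟨c + d, hcdn⟩) ↔
        ((∀ k : Fin n, k.val < c + d → Phi ω k = true) ∨
         (∀ k : Fin n, Phi ω k = false)) :=
      fun ω => (and_congr (spec hn ω h0n hcn (by omega))
          (spec hn ω hcn hcdn (by omega))).trans (CD_iff hn hc hd hcd (Phi ω))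
    have hcd_le : c + d ≤ n := by omega
    have hN := countCD (m := c + d) hn (by omega) hcd_le
    exact (PrG_eq_s16 hn _ _ hiff _ hN).trans (arith3 hcd_le)
end
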